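/- For any graph G, the first homology monoid H₁(G, ℕ) is generated, as an additive monoid, by its minimal elements: every element of H₁(G, ℕ) is a finite sum of minimal elements. -/
import Mathlib


/-- The first homology monoid `H₁(G,ℕ)` of a graph `G = (E,V,s,t)` with coefficients in `ℕ`:
the additive submonoid of 1-cycles in `C₁(G,ℕ) = E →₀ ℕ`, i.e. those 1-chains `c` with
`C[s](c) = C[t](c)`, where `C[s], C[t]` are induced by the source and target maps. -/
noncomputable def graphH1 {E V : Type*} (s t : E → V) : AddSubmonoid (E →₀ ℕ) where
  carrier := {c | Finsupp.mapDomain s c = Finsupp.mapDomain t c}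
  add_mem' := by
    intro a b ha hb
    simp only [Set.mem_setOf_eq, Finsupp.mapDomain_add] at *
    rw [ha, hb]
  zero_mem' := by
    simp only [Set.mem_setOf_eq, Finsupp.mapDomain_zero]

/-- `x` is a minimal element of `H₁(G,ℕ)` for the canonical preorder (`y ≤ x` iff `y + a = x`
for some `a ∈ H₁(G,ℕ)`): `x` is a nonzero cycle and every cycle `y ≤ x` is `x` or `0`. -/
def IsMinimalCycle {E V : Type*} (s t : E → V) (x : E →₀ ℕ) : Prop :=
  x ∈ graphH1 s t ∧ x ≠ 0 ∧
    ∀ y ∈ graphH1 s t, (∃ a ∈ graphH1 s t, y + a = x) → y = x ∨ y = 0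

lemma degree_add' {E : Type*} (a b : E →₀ ℕ) :
    Finsupp.degree (a + b) = Finsupp.degree a + Finsupp.degree b := by
  simp only [Finsupp.degree_eq_weight_one, map_add]

/-- For any graph `G`, the monoid `H₁(G,ℕ)` is generated by its minimal
elements: every 1-cycle is a finite sum of minimal cycles. -/
theorem h1_generated_by_minimal_elements {E V : Type*} (s t : E → V) :
    ∀ c ∈ graphH1 s t, c ∈ AddSubmonoid.closure {x : E →₀ ℕ | IsMinimalCycle s t x} := by
  intro c hc
  generalize hn : Finsupp.degree c = n
  induction n using Nat.strong_induction_on generalizing c with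
  | _ n ih =>
    by_cases h0 : c = 0
    · exact h0 ▸ AddSubmonoid.zero_mem _
    by_cases hmin : IsMinimalCycle s t c
    · exact AddSubmonoid.subset_closure hmin
    · unfold IsMinimalCycle at hmin
      push_neg at hmin
      obtain ⟨y, hy, ⟨a, ha, hya⟩, hyne, hy0⟩ := hmin hc h0
      have ha0 : a ≠ 0 := by
        rintro rfl
        exact hyne (by simpa using hya)
      have hdeg : Finsupp.degree y + Finsupp.degree a = n := by
        rw [← degree_add', hya, hn]
      have hy' : Finsupp.degree y ≠ 0 := fun h => hy0 ((Finsupp.degree_eq_zero_iff y).mp h)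
      have ha' : Finsupp.degree a ≠ 0 := fun h => ha0 ((Finsupp.degree_eq_zero_iff a).mp h)
      have h1 := ih (Finsupp.degree y) (by omega) y hy rfl
      have h2 := ih (Finsupp.degree a) (by omega) a ha rfl
      subst hya
      exact AddSubmonoid.add_mem _ h1 h2
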